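/- Let λ₁, …, λ_N be distinct real numbers and P₁, …, P_N orthogonal projections on ℂ^m. The block Hankel matrix (T_{s+k})_{s,k=0}^{p-1} with T_s = Σ_j λ_jˢ P_j is invertible (equivalently, positive definite) if and only if there is no nonzero ℂ^m-valued polynomial F of degree at most p-1 with P_j F(λ_j) = 0 for all j = 1, …, N. -/
import Mathlib


open Matrix Finset
open scoped ComplexOrder

/-- The block Hankel matrix `(T_{s+k})_{s,k=0}^{p-1}`, `T_s = ∑ j (λ j)^s • P j`, is
invertible if and only if there is no nonzero `ℂ^m`-valued polynomial `F` of degree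
at most `p-1` with `P j F(λ j) = 0` for all `j`. -/
theorem hankel_invertible_iff_tame (m N p : ℕ) (lam : Fin N → ℝ)
    (hlam : Function.Injective lam)
    (P : Fin N → Matrix (Fin m) (Fin m) ℂ)
    (hPherm : ∀ j, (P j)ᴴ = P j) (hPidem : ∀ j, P j * P j = P j) :
    IsUnit (Matrix.of fun x y : Fin p × Fin m =>
        (∑ j : Fin N, ((lam j : ℂ) ^ ((x.1 : ℕ) + (y.1 : ℕ))) • P j) x.2 y.2) ↔
      ¬ ∃ v : Fin p → Fin m → ℂ, v ≠ 0 ∧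
          ∀ j, P j *ᵥ (∑ s : Fin p, ((lam j : ℂ) ^ (s : ℕ)) • v s) = 0 := by
  classical
  set A : Matrix (Fin N × Fin m) (Fin p × Fin m) ℂ :=
    Matrix.of fun ja sx => ((lam ja.1 : ℂ) ^ (sx.1 : ℕ)) * P ja.1 ja.2 sx.2 with hA
  set H : Matrix (Fin p × Fin m) (Fin p × Fin m) ℂ :=
    Matrix.of fun x y : Fin p × Fin m =>
      (∑ j : Fin N, ((lam j : ℂ) ^ ((x.1 : ℕ) + (y.1 : ℕ))) • P j) x.2 y.2 with hH
  have hHA : H = Aᴴ * A := by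
    ext ⟨s, x⟩ ⟨k, y⟩
    simp only [hH, hA, Matrix.mul_apply, Matrix.conjTranspose_apply, Matrix.of_apply,
      Matrix.sum_apply, Matrix.smul_apply, smul_eq_mul]
    rw [Fintype.sum_prod_type]
    refine Finset.sum_congr rfl fun j _ => ?_
    have hstar : star ((lam j : ℂ) ^ (s : ℕ)) = (lam j : ℂ) ^ (s : ℕ) := by
      rw [RCLike.star_def]; simp [← Complex.ofReal_pow]
    have key : ∑ a : Fin m, star (((lam j : ℂ) ^ (s : ℕ)) * P j a x) *
        (((lam j : ℂ) ^ (k : ℕ)) * P j a y)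
        = ((lam j : ℂ) ^ ((s : ℕ) + (k : ℕ))) * ∑ a, star (P j a x) * P j a y := by
      rw [Finset.mul_sum]
      refine Finset.sum_congr rfl fun a _ => ?_
      simp only [star_mul', hstar, pow_add]
      ring
    rw [key]
    have : ∑ a : Fin m, star (P j a x) * P j a y = ((P j)ᴴ * P j) x y := by
      simp [Matrix.mul_apply, Matrix.conjTranspose_apply]
    rw [this, hPherm, hPidem]
  -- kernel of A
  have hAker : ∀ u : Fin p × Fin m → ℂ, A *ᵥ u = 0 ↔
      ∀ j, P j *ᵥ (fun a => ∑ s : Fin p, ((lam j : ℂ) ^ (s : ℕ)) * u (s, a)) = 0 := by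
    intro u
    have hcomp : ∀ j a, (A *ᵥ u) (j, a)
        = (P j *ᵥ fun b => ∑ s : Fin p, ((lam j : ℂ) ^ (s : ℕ)) * u (s, b)) a := by
      intro j a
      simp only [Matrix.mulVec, dotProduct, hA, Matrix.of_apply]
      rw [Fintype.sum_prod_type, Finset.sum_comm]
      refine Finset.sum_congr rfl fun b _ => ?_
      rw [Finset.mul_sum]
      refine Finset.sum_congr rfl fun s _ => ?_
      ring
    constructor
    · intro h j
      funext a
      rw [← hcomp]
      exact congrFun h (j, a)
    · intro h
      funext ⟨j, a⟩
      rw [hcomp j a, h j]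
      rfl
  -- main equivalence
  have hdet : IsUnit H ↔ ¬ ∃ u : Fin p × Fin m → ℂ, u ≠ 0 ∧ H *ᵥ u = 0 := by
    rw [Matrix.isUnit_iff_isUnit_det, isUnit_iff_ne_zero, Ne, ← Matrix.exists_mulVec_eq_zero_iff]
  rw [hdet]
  apply not_congr
  constructor
  · rintro ⟨u, hu, hHu⟩
    refine ⟨fun s a => u (s, a), ?_, ?_⟩
    · intro h
      apply hu
      funext ⟨s, a⟩
      exact congrFun (congrFun h s) a
    · intro j
      rw [hHA, conjTranspose_mul_self_mulVec_eq_zero, hAker] at hHu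
      have := hHu j
      convert this using 2
      funext a
      simp [Finset.sum_apply]
  · rintro ⟨v, hv, hPv⟩
    refine ⟨fun sx => v sx.1 sx.2, ?_, ?_⟩
    · intro h
      apply hv
      funext s a
      exact congrFun h (s, a)
    · rw [hHA, conjTranspose_mul_self_mulVec_eq_zero, hAker]
      intro j
      have := hPv j
      convert this using 2
      funext a
      simp [Finset.sum_apply]
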